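/- Let h(I₁,I₂) = I₁·I₂ and let f : 𝕋 → ℝ be a C¹ function. Consider the Hamiltonian H(θ₁,θ₂,I₁,I₂) = I₁I₂ + ε·f(θ₁) on 𝕋² × ℝ². If the initial condition satisfies I₂(0) = 0, then the solution of the Hamiltonian equations satisfies I₂(t) = 0, θ₁(t) = θ₁(0) for all t, and I₁(t) = I₁(0) - t·ε·f'(θ₁(0)). In particular, if f'(θ₁(0)) ≠ 0, then |I₁(t) - I₁(0)| = ε|t|·|f'(θ₁(0))| grows linearly in time. -/

import Mathlib

theorem stmt_1 (ε : ℝ) (hε : 0 < ε) (f : ℝ → ℝ)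
    (hf : ContDiff ℝ 1 f) (hper : ∀ x, f (x + 1) = f x)
    (θ₁ θ₂ I₁ I₂ : ℝ → ℝ)
    (h1 : ∀ t, HasDerivAt I₁ (-(ε * deriv f (θ₁ t))) t)
    (h2 : ∀ t, HasDerivAt I₂ 0 t)
    (h3 : ∀ t, HasDerivAt θ₁ (I₂ t) t)
    (h4 : ∀ t, HasDerivAt θ₂ (I₁ t) t)
    (h0 : I₂ 0 = 0) :
    (∀ t, I₂ t = 0) ∧ (∀ t, θ₁ t = θ₁ 0) ∧
    (∀ t, I₁ t = I₁ 0 - t * (ε * deriv f (θ₁ 0))) ∧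
    (deriv f (θ₁ 0) ≠ 0 →
      ∀ t, |I₁ t - I₁ 0| = ε * |t| * |deriv f (θ₁ 0)|) := by
  have hI2 : ∀ t, I₂ t = 0 := by
    have := is_const_of_deriv_eq_zero (f := I₂)
      (fun t => (h2 t).differentiableAt) (fun t => (h2 t).deriv)
    intro t; rw [this t 0, h0]
  have hθ1 : ∀ t, θ₁ t = θ₁ 0 := by
    have := is_const_of_deriv_eq_zero (f := θ₁)
      (fun t => (h3 t).differentiableAt)
      (fun t => by rw [(h3 t).deriv, hI2])
    intro t; exact this t 0
  have hI1 : ∀ t, I₁ t = I₁ 0 - t * (ε * deriv f (θ₁ 0)) := by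
    have key : ∀ t, HasDerivAt (fun t => I₁ t - (I₁ 0 - t * (ε * deriv f (θ₁ 0)))) 0 t := by
      intro t
      have h := (h1 t).sub ((hasDerivAt_const t (I₁ 0)).sub
        ((hasDerivAt_id t).mul_const (ε * deriv f (θ₁ 0))))
      refine h.congr_deriv ?_
      rw [hθ1 t]; ring
    have hc := is_const_of_deriv_eq_zero (f := fun t => I₁ t - (I₁ 0 - t * (ε * deriv f (θ₁ 0))))
      (fun t => (key t).differentiableAt) (fun t => (key t).deriv)
    intro t
    have := hc t 0
    simp at this
    linarith
  refine ⟨hI2, hθ1, hI1, fun _ t => ?_⟩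
  rw [hI1 t]
  rw [show I₁ 0 - t * (ε * deriv f (θ₁ 0)) - I₁ 0 = -(t * (ε * deriv f (θ₁ 0))) by ring]
  rw [abs_neg, abs_mul, abs_mul, abs_of_pos hε]
  ring
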